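/- Let α < 0, ε ≥ 0, and f : (0,1) → ℝ satisfy |f(x) + (1−x)^α f(y/(1−x)) − f(y) − (1−y)^α f(x/(1−y))| ≤ ε for all (x,y) with x, y, x+y ∈ (0,1). Then there exist a, b ∈ ℝ with f(x) = a x^α + b(1−x)^α − b for all x ∈ (0,1). Conversely, every function of this form satisfies the inequality (indeed with ε = 0). -/

import Mathlib

open Set Real

namespace Stmt5


/-- Data of a symmetric 2-cocycle on the positive reals. -/
structure CD where
  S : ℝ → ℝ → ℝ
  hsym : ∀ x y : ℝ, 0 < x → 0 < y → S x y = S y x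
  hcoc : ∀ x y z : ℝ, 0 < x → 0 < y → 0 < z →
    S x y + S (x + y) z = S y z + S x (y + z)

/-- carrier of the twisted monoid -/
def E : Type := ℝ × {t : ℝ // 0 < t}

variable (𝒮 : CD)

def eadd (p q : E) : E :=
  (p.1 + q.1 + 𝒮.S p.2.1 q.2.1, ⟨p.2.1 + q.2.1, add_pos p.2.2 q.2.2⟩)

lemma eadd_comm (p q : E) : eadd 𝒮 p q = eadd 𝒮 q p := by
  unfold eadd
  refine Prod.ext ?_ (Subtype.ext ?_)
  · simp only
    rw [𝒮.hsym _ _ p.2.2 q.2.2]; ring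
  · simp only
    ring

lemma eadd_assoc (p q r : E) : eadd 𝒮 (eadd 𝒮 p q) r = eadd 𝒮 p (eadd 𝒮 q r) := by
  unfold eadd
  refine Prod.ext ?_ (Subtype.ext ?_)
  · simp only
    have := 𝒮.hcoc p.2.1 q.2.1 r.2.1 p.2.2 q.2.2 r.2.2
    linarith
  · simp only
    ring

lemma eadd_interchange (w x y z : E) :
    eadd 𝒮 (eadd 𝒮 w x) (eadd 𝒮 y z) = eadd 𝒮 (eadd 𝒮 w y) (eadd 𝒮 x z) := by
  rw [eadd_assoc, ← eadd_assoc 𝒮 x y z, eadd_comm 𝒮 x y, eadd_assoc 𝒮 y x z, ← eadd_assoc]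

lemma eadd_interchange' (w x y z : E) :
    eadd 𝒮 (eadd 𝒮 w x) (eadd 𝒮 y z) = eadd 𝒮 (eadd 𝒮 w z) (eadd 𝒮 y x) := by
  rw [eadd_interchange, eadd_comm 𝒮 x z, eadd_interchange]

lemma eadd_cancel {p q r : E} (h : eadd 𝒮 p r = eadd 𝒮 q r) : p = q := by
  unfold eadd at h
  have h1 := congrArg Prod.fst h
  have h2 := congrArg (fun u : E => u.2.1) h
  simp only at h1 h2
  have hp2 : p.2.1 = q.2.1 := by linarith
  refine Prod.ext ?_ (Subtype.ext hp2)
  rw [hp2] at h1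
  linarith

def padd (p q : E × E) : E × E := (eadd 𝒮 p.1 q.1, eadd 𝒮 p.2 q.2)

def sd : Setoid (E × E) where
  r p q := eadd 𝒮 p.1 q.2 = eadd 𝒮 q.1 p.2
  iseqv := by
    constructor
    · intro p; rfl
    · intro p q h; exact h.symm
    · intro a b c h1 h2
      apply eadd_cancel 𝒮 (r := eadd 𝒮 b.1 b.2)
      calc eadd 𝒮 (eadd 𝒮 a.1 c.2) (eadd 𝒮 b.1 b.2)
          = eadd 𝒮 (eadd 𝒮 a.1 b.2) (eadd 𝒮 b.1 c.2) := by
            rw [eadd_interchange']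
        _ = eadd 𝒮 (eadd 𝒮 b.1 a.2) (eadd 𝒮 c.1 b.2) := by rw [h1, h2]
        _ = eadd 𝒮 (eadd 𝒮 c.1 a.2) (eadd 𝒮 b.1 b.2) := by
            rw [eadd_interchange', eadd_comm 𝒮 (eadd 𝒮 b.1 b.2)]

def G : Type := Quotient (sd 𝒮)

def gmk (p : E × E) : G 𝒮 := Quotient.mk (sd 𝒮) p

def e0 : E := (0, ⟨1, one_pos⟩)

lemma gsound {p q : E × E} (h : eadd 𝒮 p.1 q.2 = eadd 𝒮 q.1 p.2) : gmk 𝒮 p = gmk 𝒮 q :=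
  Quotient.sound h

lemma gexact {p q : E × E} (h : gmk 𝒮 p = gmk 𝒮 q) :
    eadd 𝒮 p.1 q.2 = eadd 𝒮 q.1 p.2 := Quotient.exact h

instance : Add (G 𝒮) :=
  ⟨Quotient.map₂ (sa := sd 𝒮) (sb := sd 𝒮) (sc := sd 𝒮) (padd 𝒮) (by
    intro a b hab c d hcd
    show eadd 𝒮 (padd 𝒮 a c).1 (padd 𝒮 b d).2 = eadd 𝒮 (padd 𝒮 b d).1 (padd 𝒮 a c).2
    unfold padd
    calc eadd 𝒮 (eadd 𝒮 a.1 c.1) (eadd 𝒮 b.2 d.2)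
        = eadd 𝒮 (eadd 𝒮 a.1 b.2) (eadd 𝒮 c.1 d.2) := by rw [eadd_interchange]
      _ = eadd 𝒮 (eadd 𝒮 b.1 a.2) (eadd 𝒮 d.1 c.2) := by rw [hab, hcd]
      _ = eadd 𝒮 (eadd 𝒮 b.1 d.1) (eadd 𝒮 a.2 c.2) := by rw [eadd_interchange])⟩

instance : Zero (G 𝒮) := ⟨gmk 𝒮 (e0, e0)⟩

instance : Neg (G 𝒮) :=
  ⟨Quotient.map (sa := sd 𝒮) (sb := sd 𝒮) Prod.swap (by
    intro a b h
    show eadd 𝒮 a.2 b.1 = eadd 𝒮 b.2 a.1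
    rw [eadd_comm, ← h, eadd_comm])⟩

instance : AddCommGroup (G 𝒮) where
  add := (· + ·)
  zero := 0
  neg := (- ·)
  add_assoc := by
    intro a b c
    induction a using Quotient.inductionOn with | _ p =>
    induction b using Quotient.inductionOn with | _ q =>
    induction c using Quotient.inductionOn with | _ r =>
    refine Quotient.sound ?_
    show eadd 𝒮 (padd 𝒮 (padd 𝒮 p q) r).1 (padd 𝒮 p (padd 𝒮 q r)).2 =
      eadd 𝒮 (padd 𝒮 p (padd 𝒮 q r)).1 (padd 𝒮 (padd 𝒮 p q) r).2
    unfold padd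
    simp only
    simp only [eadd_assoc]
  zero_add := by
    intro a
    induction a using Quotient.inductionOn with | _ p =>
    refine Quotient.sound ?_
    show eadd 𝒮 (padd 𝒮 (e0, e0) p).1 p.2 = eadd 𝒮 p.1 (padd 𝒮 (e0, e0) p).2
    unfold padd
    simp only
    rw [eadd_comm 𝒮 (e0) p.1, eadd_assoc]
  add_zero := by
    intro a
    induction a using Quotient.inductionOn with | _ p =>
    refine Quotient.sound ?_
    show eadd 𝒮 (padd 𝒮 p (e0, e0)).1 p.2 = eadd 𝒮 p.1 (padd 𝒮 p (e0, e0)).2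
    unfold padd
    simp only
    rw [eadd_comm 𝒮 p.2 (e0), eadd_assoc]
  add_comm := by
    intro a b
    induction a using Quotient.inductionOn with | _ p =>
    induction b using Quotient.inductionOn with | _ q =>
    refine Quotient.sound ?_
    show eadd 𝒮 (padd 𝒮 p q).1 (padd 𝒮 q p).2 = eadd 𝒮 (padd 𝒮 q p).1 (padd 𝒮 p q).2
    unfold padd
    simp only
    rw [eadd_comm 𝒮 p.1 q.1, eadd_comm 𝒮 p.2 q.2]
  neg_add_cancel := by
    intro a
    induction a using Quotient.inductionOn with | _ p =>
    refine Quotient.sound ?_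
    show eadd 𝒮 (padd 𝒮 p.swap p).1 (e0) = eadd 𝒮 (e0) (padd 𝒮 p.swap p).2
    unfold padd
    simp only [Prod.swap]
    rw [eadd_comm 𝒮 p.2 p.1, eadd_comm]
  nsmul := nsmulRec
  zsmul := zsmulRec

lemma gadd_def (p q : E × E) :
    gmk 𝒮 p + gmk 𝒮 q = gmk 𝒮 (padd 𝒮 p q) := rfl

lemma gzero_def : (0 : G 𝒮) = gmk 𝒮 (e0, e0) := rfl

/-- the canonical "difference with e0" map -/
def gj (p : E) : G 𝒮 := gmk 𝒮 (eadd 𝒮 p (e0), e0)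

lemma gj_add (p q : E) : gj 𝒮 p + gj 𝒮 q = gj 𝒮 (eadd 𝒮 p q) := by
  have h : gj 𝒮 p + gj 𝒮 q = gj 𝒮 (eadd 𝒮 p q) + gmk 𝒮 (e0, e0) := by
    unfold gj
    rw [gadd_def, gadd_def]
    apply gsound
    unfold padd
    simp only
    have key : eadd 𝒮 (eadd 𝒮 p e0) (eadd 𝒮 q e0) = eadd 𝒮 (eadd 𝒮 (eadd 𝒮 p q) e0) e0 := by
      rw [eadd_interchange, ← eadd_assoc]
    exact congrArg (fun u => eadd 𝒮 u (eadd 𝒮 e0 e0)) key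
  rw [h, ← gzero_def, add_zero]

def giota : ℝ →+ G 𝒮 where
  toFun c := gmk 𝒮 ((c, ⟨1, one_pos⟩), e0)
  map_zero' := rfl
  map_add' := by
    intro c d
    show _ = gmk 𝒮 _ + gmk 𝒮 _
    rw [gadd_def]
    apply gsound
    unfold padd
    simp only
    unfold eadd e0
    refine Prod.ext ?_ (Subtype.ext ?_)
    · simp only
      rw [𝒮.hsym 1 (1+1) one_pos (by norm_num)]
      ring
    · simp only
      ring

lemma giota_injective : Function.Injective (giota 𝒮) := by
  intro c d h
  have h2 := gexact 𝒮 h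
  unfold eadd at h2
  have h1 := congrArg Prod.fst h2
  simp only at h1
  linarith

lemma gj_shift (a : ℝ) (z : {t : ℝ // 0 < t}) :
    gj 𝒮 (a, z) = giota 𝒮 a + gj 𝒮 (0, z) := by
  show _ = gmk 𝒮 _ + _
  unfold gj
  rw [gadd_def]
  apply gsound
  unfold padd
  simp only
  have key : eadd 𝒮 (a, z) (e0) = eadd 𝒮 (a, ⟨1, one_pos⟩) ((0 : ℝ), z) := by
    unfold eadd e0
    refine Prod.ext ?_ (Subtype.ext ?_)
    · simp only
      rw [𝒮.hsym z.1 1 z.2 one_pos]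
    · simp only
      ring
  calc eadd 𝒮 (eadd 𝒮 (a, z) (e0)) (eadd 𝒮 (e0) (e0))
      = eadd 𝒮 (eadd 𝒮 (a, ⟨1, one_pos⟩) ((0 : ℝ), z)) (eadd 𝒮 (e0) (e0)) := by rw [key]
    _ = eadd 𝒮 (eadd 𝒮 (a, ⟨1, one_pos⟩) (e0)) (eadd 𝒮 ((0 : ℝ), z) (e0)) := by
        erw [eadd_interchange']
        erw [eadd_comm 𝒮 (e0) ((0 : ℝ), z)]
    _ = eadd 𝒮 (eadd 𝒮 (a, ⟨1, one_pos⟩) (eadd 𝒮 ((0 : ℝ), z) (e0))) (e0) := by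
        erw [eadd_assoc, eadd_assoc, eadd_comm 𝒮 (e0) (eadd 𝒮 ((0:ℝ), z) (e0))]

/-- The integrator: a function `ψ` on the positive reals whose second difference is `S`. -/
theorem exists_integrator :
    ∃ ψ : ℝ → ℝ, ∀ x y : ℝ, 0 < x → 0 < y →
      ψ (x + y) = ψ x + ψ y + 𝒮.S x y := by
  obtain ⟨r, hr⟩ := (Module.Baer.of_divisible ℝ).extension_property_addMonoidHom
    (giota 𝒮) (giota_injective 𝒮) (AddMonoidHom.id ℝ)
  have hri : ∀ c : ℝ, r (giota 𝒮 c) = c := fun c => congrFun (congrArg DFunLike.coe hr) c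
  refine ⟨fun x => if hx : 0 < x then - r (gj 𝒮 (0, ⟨x, hx⟩)) else 0, ?_⟩
  intro x y hx hy
  dsimp only
  rw [dif_pos hx, dif_pos hy, dif_pos (add_pos hx hy)]
  have e1 : eadd 𝒮 ((0 : ℝ), ⟨x, hx⟩) ((0 : ℝ), ⟨y, hy⟩) =
      (𝒮.S x y, ⟨x + y, add_pos hx hy⟩) := by
    unfold eadd
    refine Prod.ext ?_ (Subtype.ext ?_) <;> simp
  have e2 : gj 𝒮 ((0 : ℝ), ⟨x, hx⟩) + gj 𝒮 ((0 : ℝ), ⟨y, hy⟩) =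
      giota 𝒮 (𝒮.S x y) + gj 𝒮 (0, ⟨x + y, add_pos hx hy⟩) := by
    erw [gj_add, e1, gj_shift]
  have e3 := congrArg r e2
  rw [map_add, map_add, hri] at e3
  linarith


section FunEq



variable (α : ℝ) (f : ℝ → ℝ)

/-- The defect of the functional equation. -/
noncomputable def DD (x y : ℝ) : ℝ :=
  f x + (1 - x) ^ α * f (y / (1 - x)) - f y - (1 - y) ^ α * f (x / (1 - y))

/-- Three-variable symmetrization. -/
noncomputable def GG (x y z : ℝ) : ℝ :=
  f x + (1 - x) ^ α * f (y / (1 - x)) + (1 - x - y) ^ α * f (z / (1 - x - y))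

lemma key1 (x y z : ℝ) : GG α f x y z - GG α f y x z = DD α f x y := by
  unfold GG DD
  have h : (1 : ℝ) - y - x = 1 - x - y := by ring
  rw [h]
  ring

lemma key2 (x y z : ℝ) (hx : 0 < x) (hy : 0 < y) (hz : 0 < z)
    (hxy : x + y < 1) (hxz : x + z < 1) :
    GG α f x y z - GG α f x z y = (1 - x) ^ α * DD α f (y / (1 - x)) (z / (1 - x)) := by
  have hx1 : (0 : ℝ) < 1 - x := by linarith
  have hx1' : (1 : ℝ) - x ≠ 0 := ne_of_gt hx1
  have hxy1 : (0 : ℝ) < 1 - x - y := by linarith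
  have hxz1 : (0 : ℝ) < 1 - x - z := by linarith
  have e1 : (1 : ℝ) - y / (1 - x) = (1 - x - y) / (1 - x) := by field_simp
  have e1' : (1 : ℝ) - z / (1 - x) = (1 - x - z) / (1 - x) := by field_simp
  have e3 : z / (1 - x) / ((1 - x - y) / (1 - x)) = z / (1 - x - y) := by
    rw [div_div_eq_mul_div, div_mul_eq_mul_div, mul_comm,
      show (1-x) * z / (1-x) = z from by field_simp]
  have e3' : y / (1 - x) / ((1 - x - z) / (1 - x)) = y / (1 - x - z) := by
    rw [div_div_eq_mul_div, div_mul_eq_mul_div, mul_comm,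
      show (1-x) * y / (1-x) = y from by field_simp]
  have e2 : ((1 - x - y) / (1 - x)) ^ α = (1 - x - y) ^ α / (1 - x) ^ α :=
    Real.div_rpow (le_of_lt hxy1) (le_of_lt hx1) α
  have e2' : ((1 - x - z) / (1 - x)) ^ α = (1 - x - z) ^ α / (1 - x) ^ α :=
    Real.div_rpow (le_of_lt hxz1) (le_of_lt hx1) α
  have hpow : (0 : ℝ) < (1 - x) ^ α := Real.rpow_pos_of_pos hx1 α
  unfold GG DD
  rw [e1, e1', e3, e3', e2, e2']
  field_simp
  ring

/-- From the stability inequality to the exact equation. -/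
lemma exact_eq (hα : α < 0) (ε : ℝ) (hε : 0 ≤ ε)
    (hf : ∀ x y : ℝ, x ∈ Ioo (0 : ℝ) 1 → y ∈ Ioo (0 : ℝ) 1 → x + y ∈ Ioo (0 : ℝ) 1 →
      |f x + (1 - x) ^ α * f (y / (1 - x)) - f y - (1 - y) ^ α * f (x / (1 - y))| ≤ ε)
    (u v : ℝ) (hu : 0 < u) (hv : 0 < v) (huv : u + v < 1) :
    DD α f u v = 0 := by
  have hu1 : u < 1 := by linarith
  have hv1 : v < 1 := by linarith
  -- the master bound
  have master : ∀ t : ℝ, 0 < t → t < 1 →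
      t ^ α * |DD α f u v| ≤ (3 + (1 - u) ^ α + (1 - v) ^ α) * ε := by
    intro t ht0 ht1
    set x := 1 - t with hxdef
    set y := t * u with hydef
    set z := t * v with hzdef
    have hx : 0 < x := by simp only [hxdef]; linarith
    have hx1 : x < 1 := by simp only [hxdef]; linarith
    have hy : 0 < y := mul_pos ht0 hu
    have hz : 0 < z := mul_pos ht0 hv
    have hy1 : y < u := by
      calc y = t * u := rfl
      _ < 1 * u := by apply mul_lt_mul_of_pos_right ht1 hu
      _ = u := one_mul u
    have hz1 : z < v := by
      calc z = t * v := rfl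
      _ < 1 * v := by apply mul_lt_mul_of_pos_right ht1 hv
      _ = v := one_mul v
    have hxyz : x + y + z < 1 := by
      have : x + y + z = 1 - t * (1 - u - v) := by simp only [hxdef, hydef, hzdef]; ring
      rw [this]
      nlinarith
    have hxy : x + y < 1 := by linarith
    have hxz : x + z < 1 := by linarith
    have hyz : y + z < 1 := by linarith
    -- the five-term chain
    have k0 := key2 α f x y z hx hy hz hxy hxz
    have k2 := key2 α f y x z hy hx hz (by linarith) (by linarith)
    have k4 := key2 α f z y x hz hy hx (by linarith) (by linarith)
    have k1 := key1 α f x y z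
    have k3 := key1 α f y z x
    have k5 := key1 α f z x y
    -- rewrite the lhs of k0
    have ex : (1 : ℝ) - x = t := by simp only [hxdef]; ring
    have ey : y / t = u := by rw [hydef]; exact mul_div_cancel_left₀ u (ne_of_gt ht0)
    have ez : z / t = v := by rw [hzdef]; exact mul_div_cancel_left₀ v (ne_of_gt ht0)
    rw [ex] at k0
    rw [ey, ez] at k0
    -- assemble
    have main : t ^ α * DD α f u v =
        DD α f x y + (1 - y) ^ α * DD α f (x / (1 - y)) (z / (1 - y)) + DD α f y z
          + (1 - z) ^ α * DD α f (y / (1 - z)) (x / (1 - z)) + DD α f z x := by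
      have c1 : GG α f x y z - GG α f x z y =
          (GG α f x y z - GG α f y x z) + (GG α f y x z - GG α f y z x)
          + (GG α f y z x - GG α f z y x) + (GG α f z y x - GG α f z x y)
          + (GG α f z x y - GG α f x z y) := by ring
      rw [k0] at c1
      rw [k1, k2, k3, k4, k5] at c1
      linarith
    -- bounds
    have b1 : |DD α f x y| ≤ ε := hf x y ⟨hx, hx1⟩ ⟨hy, by linarith⟩ ⟨by linarith, hxy⟩
    have b3 : |DD α f y z| ≤ ε := hf y z ⟨hy, by linarith⟩ ⟨hz, by linarith⟩ ⟨by linarith, hyz⟩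
    have b5 : |DD α f z x| ≤ ε := hf z x ⟨hz, by linarith⟩ ⟨hx, hx1⟩ ⟨by linarith, by linarith⟩
    have hy1' : (0:ℝ) < 1 - y := by linarith
    have hz1' : (0:ℝ) < 1 - z := by linarith
    have b2 : |DD α f (x / (1 - y)) (z / (1 - y))| ≤ ε := by
      apply hf
      · constructor
        · positivity
        · rw [div_lt_one hy1']; linarith
      · constructor
        · positivity
        · rw [div_lt_one hy1']; linarith
      · constructor
        · positivity
        · have : x / (1 - y) + z / (1 - y) = (x + z) / (1 - y) := by ring
          rw [this, div_lt_one hy1']; linarith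
    have b4 : |DD α f (y / (1 - z)) (x / (1 - z))| ≤ ε := by
      apply hf
      · constructor
        · positivity
        · rw [div_lt_one hz1']; linarith
      · constructor
        · positivity
        · rw [div_lt_one hz1']; linarith
      · constructor
        · positivity
        · have : y / (1 - z) + x / (1 - z) = (y + x) / (1 - z) := by ring
          rw [this, div_lt_one hz1']; linarith
    -- coefficient bounds
    have hcy : (1 - y) ^ α ≤ (1 - u) ^ α :=
      Real.rpow_le_rpow_of_nonpos (by linarith) (by linarith) (le_of_lt hα)
    have hcz : (1 - z) ^ α ≤ (1 - v) ^ α :=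
      Real.rpow_le_rpow_of_nonpos (by linarith) (by linarith) (le_of_lt hα)
    have hpy : (0:ℝ) < (1 - y) ^ α := Real.rpow_pos_of_pos hy1' α
    have hpz : (0:ℝ) < (1 - z) ^ α := Real.rpow_pos_of_pos hz1' α
    calc t ^ α * |DD α f u v| = |t ^ α * DD α f u v| := by
          rw [abs_mul, abs_of_pos (Real.rpow_pos_of_pos ht0 α)]
      _ ≤ |DD α f x y| + (1 - y) ^ α * |DD α f (x / (1 - y)) (z / (1 - y))| + |DD α f y z|
          + (1 - z) ^ α * |DD α f (y / (1 - z)) (x / (1 - z))| + |DD α f z x| := by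
          rw [main]
          calc |DD α f x y + (1 - y) ^ α * DD α f (x / (1 - y)) (z / (1 - y)) + DD α f y z
            + (1 - z) ^ α * DD α f (y / (1 - z)) (x / (1 - z)) + DD α f z x|
              ≤ |DD α f x y + (1 - y) ^ α * DD α f (x / (1 - y)) (z / (1 - y)) + DD α f y z
                + (1 - z) ^ α * DD α f (y / (1 - z)) (x / (1 - z))| + |DD α f z x| := abs_add_le _ _
            _ ≤ |DD α f x y + (1 - y) ^ α * DD α f (x / (1 - y)) (z / (1 - y)) + DD α f y z|
                + |(1 - z) ^ α * DD α f (y / (1 - z)) (x / (1 - z))| + |DD α f z x| := by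
                  have := abs_add_le (DD α f x y + (1 - y) ^ α * DD α f (x / (1 - y)) (z / (1 - y))
                    + DD α f y z) ((1 - z) ^ α * DD α f (y / (1 - z)) (x / (1 - z)))
                  linarith
            _ ≤ |DD α f x y + (1 - y) ^ α * DD α f (x / (1 - y)) (z / (1 - y))| + |DD α f y z|
                + |(1 - z) ^ α * DD α f (y / (1 - z)) (x / (1 - z))| + |DD α f z x| := by
                  have := abs_add_le (DD α f x y + (1 - y) ^ α * DD α f (x / (1 - y)) (z / (1 - y)))
                    (DD α f y z)
                  linarith
            _ ≤ |DD α f x y| + |(1 - y) ^ α * DD α f (x / (1 - y)) (z / (1 - y))| + |DD α f y z|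
                + |(1 - z) ^ α * DD α f (y / (1 - z)) (x / (1 - z))| + |DD α f z x| := by
                  have := abs_add_le (DD α f x y) ((1 - y) ^ α * DD α f (x / (1 - y)) (z / (1 - y)))
                  linarith
            _ = |DD α f x y| + (1 - y) ^ α * |DD α f (x / (1 - y)) (z / (1 - y))| + |DD α f y z|
                + (1 - z) ^ α * |DD α f (y / (1 - z)) (x / (1 - z))| + |DD α f z x| := by
                  rw [abs_mul, abs_mul, abs_of_pos hpy, abs_of_pos hpz]
      _ ≤ ε + (1 - u) ^ α * ε + ε + (1 - v) ^ α * ε + ε := by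
          have t2 : (1 - y) ^ α * |DD α f (x / (1 - y)) (z / (1 - y))| ≤ (1 - u) ^ α * ε := by
            apply mul_le_mul hcy b2 (abs_nonneg _) (le_of_lt (Real.rpow_pos_of_pos (by linarith) α))
          have t4 : (1 - z) ^ α * |DD α f (y / (1 - z)) (x / (1 - z))| ≤ (1 - v) ^ α * ε := by
            apply mul_le_mul hcz b4 (abs_nonneg _) (le_of_lt (Real.rpow_pos_of_pos (by linarith) α))
          linarith
      _ = (3 + (1 - u) ^ α + (1 - v) ^ α) * ε := by ring
  -- Now conclude
  set C := (3 + (1 - u) ^ α + (1 - v) ^ α) * ε with hC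
  have hC0 : 0 ≤ C := by
    apply mul_nonneg _ hε
    have := Real.rpow_pos_of_pos (show (0:ℝ) < 1 - u by linarith) α
    have := Real.rpow_pos_of_pos (show (0:ℝ) < 1 - v by linarith) α
    linarith
  have habs : |DD α f u v| ≤ 0 := by
    apply le_of_forall_pos_le_add
    intro η hη
    rcases eq_or_lt_of_le hC0 with hC0' | hCpos
    · -- C = 0
      have h2 := master (1/2) (by norm_num) (by norm_num)
      have hp : (0:ℝ) < (1/2 : ℝ) ^ α := Real.rpow_pos_of_pos (by norm_num) α
      nlinarith [abs_nonneg (DD α f u v)]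
    · -- C > 0
      set p := -α with hp
      have hp0 : 0 < p := by simp only [hp]; linarith
      set t := min (1/2) ((η / C) ^ p⁻¹) with ht
      have htp : 0 < t := by
        apply lt_min (by norm_num)
        exact Real.rpow_pos_of_pos (div_pos hη hCpos) _
      have ht1 : t < 1 := lt_of_le_of_lt (min_le_left _ _) (by norm_num)
      have hm := master t htp ht1
      have htα : (0:ℝ) < t ^ α := Real.rpow_pos_of_pos htp α
      -- t^(-α) ≤ η / C
      have hle : t ^ p ≤ η / C := by
        calc t ^ p ≤ ((η / C) ^ p⁻¹) ^ p :=
              Real.rpow_le_rpow (le_of_lt htp) (min_le_right _ _) (le_of_lt hp0)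
          _ = (η / C) ^ (p⁻¹ * p) := by
              rw [← Real.rpow_mul (le_of_lt (div_pos hη hCpos))]
          _ = η / C := by
              rw [inv_mul_cancel₀ (ne_of_gt hp0), Real.rpow_one]
      have hinv : t ^ p * t ^ α = 1 := by
        rw [← Real.rpow_add htp]
        simp [hp]
      -- |DD| = t^p * (t^α |DD|) ≤ t^p * C ≤ η
      calc |DD α f u v| = t ^ p * (t ^ α * |DD α f u v|) := by
            rw [← mul_assoc, hinv, one_mul]
        _ ≤ t ^ p * C := by
            apply mul_le_mul_of_nonneg_left hm (le_of_lt (Real.rpow_pos_of_pos htp p))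
        _ ≤ (η / C) * C := mul_le_mul_of_nonneg_right hle (le_of_lt hCpos)
        _ = η := div_mul_cancel₀ η (ne_of_gt hCpos)
        _ ≤ 0 + η := by linarith
  have := abs_nonneg (DD α f u v)
  have : |DD α f u v| = 0 := le_antisymm habs this
  exact abs_eq_zero.mp this




variable (α : ℝ) (f : ℝ → ℝ)

noncomputable def phi (u v : ℝ) : ℝ := (u + v) ^ α * f (u / (u + v))

lemma phi_homog (l u v : ℝ) (hl : 0 < l) (hu : 0 < u) (hv : 0 < v) :
    phi α f (l * u) (l * v) = l ^ α * phi α f u v := by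
  unfold phi
  have h1 : l * u + l * v = l * (u + v) := by ring
  have h2 : l * u / (l * (u + v)) = u / (u + v) :=
    mul_div_mul_left _ _ (ne_of_gt hl)
  rw [h1, h2, Real.mul_rpow (le_of_lt hl) (le_of_lt (add_pos hu hv))]
  ring

lemma phi_star (hD : ∀ x y : ℝ, 0 < x → 0 < y → x + y < 1 →
      f x + (1 - x) ^ α * f (y / (1 - x)) - f y - (1 - y) ^ α * f (x / (1 - y)) = 0)
    (u v w : ℝ) (hu : 0 < u) (hv : 0 < v) (hw : 0 < w) :
    phi α f u (v + w) + phi α f v w = phi α f v (u + w) + phi α f u w := by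
  set σ := u + v + w with hσ
  have hσ0 : 0 < σ := by positivity
  have hσ' : σ ≠ 0 := ne_of_gt hσ0
  have hD1 := hD (u / σ) (v / σ) (by positivity) (by positivity)
    (by rw [← add_div, div_lt_one hσ0]; simp only [hσ]; linarith)
  have e1 : (1 : ℝ) - u / σ = (v + w) / σ := by field_simp; simp only [hσ]; ring
  have e2 : (1 : ℝ) - v / σ = (u + w) / σ := by field_simp; simp only [hσ]; ring
  have e3 : v / σ / ((v + w) / σ) = v / (v + w) := by
    rw [div_div_eq_mul_div, div_mul_eq_mul_div, mul_comm,
      show σ * v / σ = v from by field_simp]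
  have e4 : u / σ / ((u + w) / σ) = u / (u + w) := by
    rw [div_div_eq_mul_div, div_mul_eq_mul_div, mul_comm,
      show σ * u / σ = u from by field_simp]
  rw [e1, e2, e3, e4] at hD1
  rw [Real.div_rpow (by positivity) (le_of_lt hσ0), Real.div_rpow (by positivity) (le_of_lt hσ0)]
    at hD1
  have hσα : (0:ℝ) < σ ^ α := Real.rpow_pos_of_pos hσ0 α
  unfold phi
  have g1 : u + (v + w) = σ := by simp only [hσ]; ring
  have g2 : v + (u + w) = σ := by simp only [hσ]; ring
  rw [g1, g2]
  field_simp at hD1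
  linarith

noncomputable def Sfun (x y : ℝ) : ℝ := phi α f x (y + 1) - phi α f x 1

lemma Sfun_symm (hD : ∀ x y : ℝ, 0 < x → 0 < y → x + y < 1 →
      f x + (1 - x) ^ α * f (y / (1 - x)) - f y - (1 - y) ^ α * f (x / (1 - y)) = 0)
    (x y : ℝ) (hx : 0 < x) (hy : 0 < y) : Sfun α f x y = Sfun α f y x := by
  have h := phi_star α f hD x y 1 hx hy one_pos
  unfold Sfun
  linarith

lemma Sfun_cocycle (hD : ∀ x y : ℝ, 0 < x → 0 < y → x + y < 1 →
      f x + (1 - x) ^ α * f (y / (1 - x)) - f y - (1 - y) ^ α * f (x / (1 - y)) = 0)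
    (x y z : ℝ) (hx : 0 < x) (hy : 0 < y) (hz : 0 < z) :
    Sfun α f x y + Sfun α f (x + y) z = Sfun α f y z + Sfun α f x (y + z) := by
  have A1 := phi_star α f hD (x + y) z 1 (by linarith) hz one_pos
  have A2 := phi_star α f hD x z (y + 1) hx hz (by linarith)
  have A3 := phi_star α f hD y z 1 hy hz one_pos
  rw [show z + (y + 1) = y + z + 1 from by ring, show x + (y + 1) = x + y + 1 from by ring] at A2
  unfold Sfun
  linarith


end FunEq



theorem phi_form (α : ℝ) (hα : α < 0) (φ : ℝ → ℝ → ℝ)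
    (hhom : ∀ l u v : ℝ, 0 < l → 0 < u → 0 < v → φ (l * u) (l * v) = l ^ α * φ u v)
    (ψ : ℝ → ℝ)
    (hψ : ∀ x y : ℝ, 0 < x → 0 < y → ψ (x + y) = ψ x + ψ y + (φ x (y + 1) - φ x 1)) :
    ∃ a b : ℝ, ∀ u v : ℝ, 0 < u → 0 < v →
      φ u v = a * u ^ α + b * v ^ α - b * (u + v) ^ α := by
  have hinv : ∀ l : ℝ, 0 < l → l ^ α * l ^ (-α) = 1 := by
    intro l hl
    rw [← Real.rpow_add hl]
    simp
  have h2m : (1:ℝ) < 2 ^ (-α) := by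
    rw [Real.one_lt_rpow_iff_of_pos two_pos]
    left
    exact ⟨one_lt_two, by linarith⟩
  set pt : ℝ → ℝ := fun t => ψ (t - 1) with hpt
  set χ : ℝ → ℝ := fun x => φ x 1 - ψ x with hχ
  set ρ : ℝ → ℝ → ℝ := fun l t => l ^ (-α) * pt (l * t) - pt t with hρ
  set c : ℝ → ℝ → ℝ := fun l x => l ^ (-α) * χ (l * x) - χ x with hc
  -- representation
  have rep : ∀ x v : ℝ, 0 < x → 1 < v → φ x v = χ x + pt (x + v) - pt v := by
    intro x v hx hv
    have h := hψ x (v - 1) hx (by linarith)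
    rw [show v - 1 + 1 = v from by ring] at h
    simp only [hχ, hpt]
    rw [show x + v - 1 = x + (v - 1) from by ring, h]
    ring
  -- L A
  have hLA : ∀ l x v : ℝ, 1 ≤ l → 0 < x → 1 < v → c l x = ρ l v - ρ l (x + v) := by
    intro l x v hl hx hv
    have hl0 : 0 < l := lt_of_lt_of_le one_pos hl
    have hv0 : 0 < v := by linarith
    have hlv : 1 < l * v := by nlinarith
    have r1 := rep x v hx hv
    have r2 := rep (l * x) (l * v) (by positivity) hlv
    have hh := hhom l x v hl0 hx hv0
    rw [show l * x + l * v = l * (x + v) from by ring] at r2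
    rw [r1, r2] at hh
    have hi := hinv l hl0
    simp only [hc, hρ]
    linear_combination (l ^ (-α)) * hh + (χ x + pt (x + v) - pt v) * hi
  -- c is additive
  have hLB : ∀ l x y : ℝ, 1 ≤ l → 0 < x → 0 < y → c l (x + y) = c l x + c l y := by
    intro l x y hl hx hy
    have h1 := hLA l (x + y) 2 hl (by linarith) one_lt_two
    have h2 := hLA l x 2 hl hx one_lt_two
    have h3 := hLA l y (x + 2) hl hy (by linarith)
    rw [show y + (x + 2) = x + y + 2 from by ring] at h3
    linarith
  -- rho + c is constant in t
  have hLC : ∀ l t : ℝ, 1 ≤ l → 1 < t → ρ l t + c l t = ρ l 2 + c l 2 := by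
    intro l t hl ht
    rcases lt_trichotomy t 2 with h | h | h
    · have ha := hLA l (2 - t) t hl (by linarith) ht
      have hb := hLB l (2 - t) t hl (by linarith) (by linarith)
      rw [show 2 - t + t = 2 from by ring] at ha hb
      linarith
    · rw [h]
    · have ha := hLA l (t - 2) 2 hl (by linarith) one_lt_two
      have hb := hLB l (t - 2) 2 hl (by linarith) two_pos
      rw [show t - 2 + 2 = t from by ring] at ha hb
      linarith
  set d : ℝ → ℝ := fun l => ρ l 2 + c l 2 with hd
  -- chains
  have hrch : ∀ l m t : ℝ, 0 < l → 0 < m → ρ (l * m) t = m ^ (-α) * ρ l (m * t) + ρ m t := by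
    intro l m t hl hm
    simp only [hρ]
    rw [show l * m * t = l * (m * t) from by ring,
      Real.mul_rpow (le_of_lt hl) (le_of_lt hm)]
    ring
  have hcch : ∀ l m x : ℝ, 0 < l → 0 < m → c (l * m) x = m ^ (-α) * c l (m * x) + c m x := by
    intro l m x hl hm
    simp only [hc]
    rw [show l * m * x = l * (m * x) from by ring,
      Real.mul_rpow (le_of_lt hl) (le_of_lt hm)]
    ring
  have hLD : ∀ l m : ℝ, 1 ≤ l → 1 ≤ m → d (l * m) = m ^ (-α) * d l + d m := by
    intro l m hl hm
    have hl0 : 0 < l := by linarith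
    have hm0 : 0 < m := by linarith
    have h1 := hrch l m 2 hl0 hm0
    have h2 := hcch l m 2 hl0 hm0
    have h3 := hLC l (m * 2) hl (by nlinarith)
    simp only [hd]
    linear_combination h1 + h2 + (m ^ (-α)) * h3
  have hd1 : d 1 = 0 := by
    simp only [hd, hρ, hc]
    simp [Real.one_rpow]
  set β : ℝ := d 2 / (2 ^ (-α) - 1) with hβ
  have h2ne : (2:ℝ) ^ (-α) - 1 ≠ 0 := by
    have : (0:ℝ) < 2 ^ (-α) - 1 := by linarith
    exact ne_of_gt this
  have hβden : β * (2 ^ (-α) - 1) = d 2 := by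
    rw [hβ]
    field_simp
  have hLE : ∀ l : ℝ, 1 ≤ l → d l * (2 ^ (-α) - 1) = d 2 * (l ^ (-α) - 1) := by
    intro l hl
    rcases eq_or_lt_of_le hl with h | h
    · rw [← h, hd1, Real.one_rpow]
      ring
    · have e1 := hLD l 2 (le_of_lt (by linarith)) one_le_two
      have e2 := hLD 2 l one_le_two hl
      rw [show l * 2 = 2 * l from by ring] at e1
      rw [e1] at e2
      -- e2 : 2^{-α} d l + d 2 = l^{-α} d 2 + d l
      linear_combination e2
  set Ω : ℝ → ℝ := fun t => pt t - β with hΩ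
  have hLF : ∀ l t : ℝ, 1 ≤ l → 1 < t → Ω (l * t) = l ^ α * (Ω t - c l t) := by
    intro l t hl ht
    have hl0 : 0 < l := by linarith
    have key0 : ρ l t = d l - c l t := by
      have := hLC l t hl ht
      simp only [hd] at *
      linarith
    have keyd : ρ l t * (2 ^ (-α) - 1) = d 2 * (l ^ (-α) - 1) - c l t * (2 ^ (-α) - 1) := by
      linear_combination (2 ^ (-α) - 1) * key0 + hLE l hl
    have key : ρ l t = β * (l ^ (-α) - 1) - c l t := by
      apply mul_right_cancel₀ h2ne
      linear_combination keyd - (l ^ (-α) - 1) * hβden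
    simp only [hρ] at key
    simp only [hΩ]
    have hi := hinv l hl0
    linear_combination (l ^ α) * key - (pt (l * t) - β) * hi
  have hLG : ∀ l x : ℝ, 1 ≤ l → 0 < x → χ (l * x) = l ^ α * (χ x + c l x) := by
    intro l x hl hx
    have hl0 : 0 < l := by linarith
    have hi := hinv l hl0
    have hcx : c l x = l ^ (-α) * χ (l * x) - χ x := by simp only [hc]
    linear_combination (-(l ^ α)) * hcx - (χ (l * x)) * hi
  set Ξ : ℝ → ℝ := fun x => χ x + Ω x with hΞ
  have hLH : ∀ l x : ℝ, 1 ≤ l → 1 < x → Ξ (l * x) = l ^ α * Ξ x := by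
    intro l x hl hx
    have f1 := hLF l x hl hx
    have f2 := hLG l x hl (by linarith)
    simp only [hΞ]
    linear_combination f1 + f2
  have hXipow : ∀ x : ℝ, 1 < x → Ξ x = (Ξ 2 * 2 ^ (-α)) * x ^ α := by
    intro x hx
    have e1 := hLH x 2 (le_of_lt hx) one_lt_two
    have e2 := hLH 2 x one_le_two hx
    rw [show x * 2 = 2 * x from by ring] at e1
    have e3 : 2 ^ α * Ξ x = x ^ α * Ξ 2 := by rw [← e2, e1]
    have hi2 := hinv 2 two_pos
    linear_combination (2 ^ (-α)) * e3 - (Ξ x) * hi2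
  -- c-commutation
  have hLJ : ∀ l x : ℝ, 1 ≤ l → 0 < x →
      (2 * 2 ^ (-α) - 1) * c l x = l ^ (-α) * c 2 (l * x) - c 2 x := by
    intro l x hl hx
    have hl0 : 0 < l := by linarith
    have A := hcch 2 l x two_pos hl0
    have B := hcch l 2 x hl0 two_pos
    rw [show l * 2 = 2 * l from by ring] at B
    have C2 : c l (2 * x) = 2 * c l x := by
      have := hLB l x x hl hx hx
      rw [show x + x = 2 * x from by ring] at this
      linarith
    rw [C2] at B
    linear_combination A - B
  set L : ℝ → ℝ := fun t => -(c 2 t) / (2 * 2 ^ (-α) - 1) with hL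
  have hden : (0:ℝ) < 2 * 2 ^ (-α) - 1 := by nlinarith
  have hden' : (2 * 2 ^ (-α) - 1 : ℝ) ≠ 0 := ne_of_gt hden
  have hLadd : ∀ x y : ℝ, 0 < x → 0 < y → L (x + y) = L x + L y := by
    intro x y hx hy
    simp only [hL]
    rw [hLB 2 x y one_le_two hx hy]
    ring
  have hLscale : ∀ l t : ℝ, 1 ≤ l → 0 < t → L (l * t) = l ^ α * L t - l ^ α * c l t := by
    intro l t hl ht
    have hl0 : 0 < l := by linarith
    have hi := hinv l hl0
    have hj := hLJ l t hl ht
    have key2 : -(c 2 (l * t)) = l ^ α * (-(c 2 t)) - l ^ α * c l t * (2 * 2 ^ (-α) - 1) := by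
      linear_combination (l ^ α) * hj + (c 2 (l * t)) * hi
    simp only [hL]
    rw [key2]
    field_simp
  set Ω0 : ℝ → ℝ := fun t => Ω t - L t with hΩ0
  have hLL : ∀ l t : ℝ, 1 ≤ l → 1 < t → Ω0 (l * t) = l ^ α * Ω0 t := by
    intro l t hl ht
    have f1 := hLF l t hl ht
    have f2 := hLscale l t hl (by linarith)
    simp only [hΩ0]
    linear_combination f1 - f2
  have hOm0pow : ∀ t : ℝ, 1 < t → Ω0 t = (Ω0 2 * 2 ^ (-α)) * t ^ α := by
    intro x hx
    have e1 := hLL x 2 (le_of_lt hx) one_lt_two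
    have e2 := hLL 2 x one_le_two hx
    rw [show x * 2 = 2 * x from by ring] at e1
    have e3 : 2 ^ α * Ω0 x = x ^ α * Ω0 2 := by rw [← e2, e1]
    have hi2 := hinv 2 two_pos
    linear_combination (2 ^ (-α)) * e3 - (Ω0 x) * hi2
  -- assemble
  refine ⟨Ξ 2 * 2 ^ (-α) - Ω0 2 * 2 ^ (-α), -(Ω0 2 * 2 ^ (-α)), ?_⟩
  set a : ℝ := Ξ 2 * 2 ^ (-α) - Ω0 2 * 2 ^ (-α) with ha
  set b : ℝ := -(Ω0 2 * 2 ^ (-α)) with hb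
  have main1 : ∀ x v : ℝ, 1 < x → 1 < v →
      φ x v = a * x ^ α + b * v ^ α - b * (x + v) ^ α := by
    intro x v hx hv
    have r := rep x v (by linarith) hv
    have hχx : ∀ s : ℝ, χ s = Ξ s - Ω s := by intro s; simp only [hΞ]; ring
    have hptt : ∀ t : ℝ, pt t = Ω t + β := by intro t; simp only [hΩ]; ring
    have hΩd : ∀ t : ℝ, Ω t = Ω0 t + L t := by intro t; simp only [hΩ0]; ring
    rw [hχx x, hptt (x + v), hptt v, hΩd x, hΩd (x + v), hΩd v,
      hLadd x v (by linarith) (by linarith),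
      hXipow x hx, hOm0pow x hx, hOm0pow v hv, hOm0pow (x + v) (by linarith)] at r
    rw [r, ha, hb]
    ring
  intro u v hu hv
  set l : ℝ := 1 / u + 1 / v + 1 with hldef
  have hl0 : 0 < l := by positivity
  have hlu : 1 < l * u := by
    have e : l * u = 1 + u / v + u := by rw [hldef]; field_simp
    rw [e]
    have : 0 < u / v := by positivity
    linarith
  have hlv : 1 < l * v := by
    have e : l * v = v / u + 1 + v := by rw [hldef]; field_simp
    rw [e]
    have : 0 < v / u := by positivity
    linarith
  have h1 := main1 (l * u) (l * v) hlu hlv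
  have hh := hhom l u v hl0 hu hv
  rw [h1, show l * u + l * v = l * (u + v) from by ring,
    Real.mul_rpow (le_of_lt hl0) (le_of_lt hu),
    Real.mul_rpow (le_of_lt hl0) (le_of_lt hv),
    Real.mul_rpow (le_of_lt hl0) (le_of_lt (add_pos hu hv))] at hh
  have hlα : (0:ℝ) < l ^ α := Real.rpow_pos_of_pos hl0 α
  apply mul_left_cancel₀ (ne_of_gt hlα)
  rw [← hh]
  ring


end Stmt5

open Set

/-- Hyperstability of the parametric fundamental equation of information, α < 0. -/
theorem stmt_5 (α ε : ℝ) (hα : α < 0) (hε : 0 ≤ ε) (f : ℝ → ℝ) :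
    (∀ x y : ℝ, x ∈ Ioo (0 : ℝ) 1 → y ∈ Ioo (0 : ℝ) 1 → x + y ∈ Ioo (0 : ℝ) 1 →
      |f x + (1 - x) ^ α * f (y / (1 - x)) - f y - (1 - y) ^ α * f (x / (1 - y))| ≤ ε)
    ↔ ∃ a b : ℝ, ∀ x ∈ Ioo (0 : ℝ) 1, f x = a * x ^ α + b * (1 - x) ^ α - b := by
  constructor
  · -- forward direction
    intro hf
    have hD : ∀ x y : ℝ, 0 < x → 0 < y → x + y < 1 →
        f x + (1 - x) ^ α * f (y / (1 - x)) - f y - (1 - y) ^ α * f (x / (1 - y)) = 0 := by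
      intro x y hx hy hxy
      exact Stmt5.exact_eq α f hα ε hε hf x y hx hy hxy
    set 𝒮 : Stmt5.CD :=
      ⟨Stmt5.Sfun α f, Stmt5.Sfun_symm α f hD, Stmt5.Sfun_cocycle α f hD⟩ with h𝒮
    obtain ⟨ψ, hψ⟩ := Stmt5.exists_integrator 𝒮
    have hψ' : ∀ x y : ℝ, 0 < x → 0 < y →
        ψ (x + y) = ψ x + ψ y + (Stmt5.phi α f x (y + 1) - Stmt5.phi α f x 1) := by
      intro x y hx hy
      exact hψ x y hx hy
    obtain ⟨a, b, hab⟩ := Stmt5.phi_form α hα (Stmt5.phi α f)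
      (fun l u v hl hu hv => Stmt5.phi_homog α f l u v hl hu hv) ψ hψ'
    refine ⟨a, b, ?_⟩
    intro x hx
    have hx1 : 0 < 1 - x := by have := hx.2; linarith
    have h1 := hab x (1 - x) hx.1 hx1
    have e1 : x + (1 - x) = 1 := by ring
    rw [e1, Real.one_rpow, mul_one] at h1
    have h2 : Stmt5.phi α f x (1 - x) = f x := by
      unfold Stmt5.phi
      rw [e1, Real.one_rpow, one_mul, div_one]
    rw [h2] at h1
    exact h1
  · -- converse direction
    rintro ⟨a, b, hab⟩ x y hx hy hxy
    have hx1 : (0:ℝ) < 1 - x := by have := hx.2; linarith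
    have hy1 : (0:ℝ) < 1 - y := by have := hy.2; linarith
    have hxy1 : (0:ℝ) < 1 - x - y := by have := hxy.2; linarith
    have m1 : y / (1 - x) ∈ Ioo (0:ℝ) 1 := by
      constructor
      · exact div_pos hy.1 hx1
      · rw [div_lt_one hx1]; linarith
    have m2 : x / (1 - y) ∈ Ioo (0:ℝ) 1 := by
      constructor
      · exact div_pos hx.1 hy1
      · rw [div_lt_one hy1]; linarith
    have vx := hab x hx
    have vy := hab y hy
    have v1 := hab _ m1
    have v2 := hab _ m2
    have e1 : (1:ℝ) - y / (1 - x) = (1 - x - y) / (1 - x) := by field_simp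
    have e2 : (1:ℝ) - x / (1 - y) = (1 - x - y) / (1 - y) := by field_simp; ring
    have hpα : ((1 - x) ^ α : ℝ) ≠ 0 := ne_of_gt (Real.rpow_pos_of_pos hx1 α)
    have hqα : ((1 - y) ^ α : ℝ) ≠ 0 := ne_of_gt (Real.rpow_pos_of_pos hy1 α)
    suffices h : f x + (1 - x) ^ α * f (y / (1 - x)) - f y - (1 - y) ^ α * f (x / (1 - y)) = 0 by
      rw [h]
      simpa using hε
    rw [vx, vy, v1, v2, e1, e2,
      Real.div_rpow (le_of_lt hy.1) (le_of_lt hx1),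
      Real.div_rpow (le_of_lt hxy1) (le_of_lt hx1),
      Real.div_rpow (le_of_lt hx.1) (le_of_lt hy1),
      Real.div_rpow (le_of_lt hxy1) (le_of_lt hy1)]
    field_simp
    ring
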